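/- Let C and C' be matrices in T^{n×n} supported on DAGs G and G' on the common node set [n], with weights w and w'. If Q(C) = Q(C') as subsets of ℝ^n/ℝ𝟙, then C^♭ = (C')^♭; in particular the weighted transitive reductions coincide, G^♭_w = (G')^♭_{w'}, and the weights w^♭ and (w')^♭ agree on this common graph. -/

import Mathlib

open scoped Classical
noncomputable section

/-- The min-plus tropical semiring `T = ℝ ∪ {∞}` with `⊕ = min` and `⊙ = +`. -/
abbrev Trop : Type := WithTop ℝ

/-- Min-plus identity matrix: `0` on the diagonal, `∞` off the diagonal. -/
def mpId {n : ℕ} : Matrix (Fin n) (Fin n) Trop := fun i j => if i = j then 0 else ⊤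

/-- Min-plus matrix product. -/
def mpMul {n : ℕ} (A B : Matrix (Fin n) (Fin n) Trop) : Matrix (Fin n) (Fin n) Trop :=
  fun i j => Finset.univ.inf fun k => A i k + B k j

/-- Entrywise minimum (tropical sum) of matrices. -/
def mpAdd {n : ℕ} (A B : Matrix (Fin n) (Fin n) Trop) : Matrix (Fin n) (Fin n) Trop :=
  fun i j => A i j ⊓ B i j

/-- Min-plus matrix power. -/
def mpPow {n : ℕ} (A : Matrix (Fin n) (Fin n) Trop) : ℕ → Matrix (Fin n) (Fin n) Trop
  | 0 => mpId
  | k + 1 => mpMul (mpPow A k) A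

/-- Kleene star `A* = I ⊕ A ⊕ A^{⊙2} ⊕ ⋯ ⊕ A^{⊙(n−1)}`. -/
def kleene {n : ℕ} (A : Matrix (Fin n) (Fin n) Trop) : Matrix (Fin n) (Fin n) Trop :=
  fun i j => (Finset.range n).inf fun k => mpPow A k i j

/-- `p` is a directed path from `j` to `i` in the digraph with edge relation `E`
(`E a b` meaning there is an edge `a → b`), recorded as its list of vertices. -/
def IsPathFrom {n : ℕ} (E : Fin n → Fin n → Prop) (j i : Fin n) (p : List (Fin n)) : Prop :=
  p.head? = some j ∧ p.getLast? = some i ∧ p.Chain' E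

/-- A digraph is acyclic if the only paths from a vertex to itself are trivial. -/
def IsDAG {n : ℕ} (E : Fin n → Fin n → Prop) : Prop :=
  ∀ (j : Fin n) (p : List (Fin n)), IsPathFrom E j j p → p.length ≤ 1

/-- `C ∈ T^{n×n}` is supported on the digraph `E` : zero diagonal, and for `i ≠ j`
the entry `c_ij` is finite exactly when `j → i` is an edge. -/
def SupportedOn {n : ℕ} (C : Matrix (Fin n) (Fin n) Trop) (E : Fin n → Fin n → Prop) : Prop :=
  (∀ i, C i i = 0) ∧ ∀ i j, i ≠ j → (C i j ≠ ⊤ ↔ E j i)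

/-- The edge weight function of a weight matrix: `cw C a b = c_{ba}` is the weight of
the edge `a → b`. -/
def cw {n : ℕ} (C : Matrix (Fin n) (Fin n) Trop) : Fin n → Fin n → ℝ :=
  fun a b => WithTop.untopD 0 (C b a)

/-- Total weight of a path (sum of the weights of its consecutive edges). -/
def pathWeight {n : ℕ} (w : Fin n → Fin n → ℝ) (p : List (Fin n)) : ℝ :=
  ((p.zip p.tail).map fun q => w q.1 q.2).sum

/-- The edge `j → i` belongs to the weighted transitive reduction `G^♭_w`:
the single edge is the unique minimum-weight directed path from `j` to `i`. -/
def InWTR {n : ℕ} (E : Fin n → Fin n → Prop) (w : Fin n → Fin n → ℝ) (j i : Fin n) : Prop :=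
  E j i ∧ ∀ p : List (Fin n), IsPathFrom E j i p → p ≠ [j, i] → w j i < pathWeight w p

/-- Weighted digraph polyhedron `Q(C) = {x : x_i − x_j ≤ c_ij}` (as the saturated
subset of `ℝ^n` representing a subset of `ℝ^n/ℝ𝟙`). -/
def wdp {n : ℕ} (C : Matrix (Fin n) (Fin n) Trop) : Set (Fin n → ℝ) :=
  {x | ∀ i j, i ≠ j → ((x i - x j : ℝ) : Trop) ≤ C i j}

/-- The tropical polyhedron generated by the columns of `V`: all min-plus linear
combinations `V ⊙ λ`, `λ ∈ ℝ^n` (as a saturated subset of `ℝ^d`). -/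
def tconvM {d n : ℕ} (V : Matrix (Fin d) (Fin n) Trop) : Set (Fin d → ℝ) :=
  {x | ∃ lam : Fin n → ℝ, ∀ i, (x i : Trop) = Finset.univ.inf fun j => V i j + (lam j : Trop)}

/-- `v` is reachable from `s`. -/
def Reaches {n : ℕ} (E : Fin n → Fin n → Prop) (s v : Fin n) : Prop :=
  ∃ p, IsPathFrom E s v p

/-- Edges of the transitive closure `G*`: `j → i` with `i ≠ j` reachable from `j`. -/
def EStar {n : ℕ} (E : Fin n → Fin n → Prop) (j i : Fin n) : Prop :=
  j ≠ i ∧ ∃ p, IsPathFrom E j i p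

/-- The weight matrix `C^♭` of the weighted transitive reduction `(G^♭_w, w^♭)`. -/
def CflatM {n : ℕ} (E : Fin n → Fin n → Prop) (C : Matrix (Fin n) (Fin n) Trop) :
    Matrix (Fin n) (Fin n) Trop :=
  fun a b => if a = b then 0 else if InWTR E (cw C) b a then C a b else ⊤

/- ## Auxiliary development -/
section AuxDev
variable {n : ℕ} {E E' : Fin n → Fin n → Prop} {C C' : Matrix (Fin n) (Fin n) Trop}

lemma trop_coe_untop' {a : Trop} (h : a ≠ ⊤) : ((WithTop.untopD 0 a : ℝ) : Trop) = a := by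
  induction a using WithTop.recTopCoe with
  | top => exact absurd rfl h
  | coe r => rfl

lemma pathWeight_single (w : Fin n → Fin n → ℝ) (a : Fin n) : pathWeight w [a] = 0 := by
  simp [pathWeight]

lemma pathWeight_cons_cons (w : Fin n → Fin n → ℝ) (a b : Fin n) (l : List (Fin n)) :
    pathWeight w (a :: b :: l) = w a b + pathWeight w (b :: l) := by
  simp [pathWeight]

lemma path_singleton (a : Fin n) : IsPathFrom E a a [a] := ⟨rfl, rfl, List.isChain_singleton a⟩

lemma path_edge {j i : Fin n} (h : E j i) : IsPathFrom E j i [j, i] :=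
  ⟨rfl, rfl, List.isChain_cons_cons.2 ⟨h, List.isChain_singleton i⟩⟩

lemma path_ne_nil {j i : Fin n} {p : List (Fin n)} (h : IsPathFrom E j i p) : p ≠ [] := by
  rintro rfl; simp [IsPathFrom] at h

lemma path_cons_split {j i b : Fin n} {t : List (Fin n)}
    (h : IsPathFrom E j i (j :: b :: t)) :
    E j b ∧ IsPathFrom E b i (b :: t) := by
  obtain ⟨-, hl, hc⟩ := h
  rw [List.getLast?_cons_cons] at hl
  exact ⟨(List.isChain_cons_cons.1 hc).1, rfl, hl, (List.isChain_cons_cons.1 hc).2⟩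

lemma path_head {j i : Fin n} {p : List (Fin n)} (h : IsPathFrom E j i p) :
    ∃ t, p = j :: t := by
  cases p with
  | nil => simp [IsPathFrom] at h
  | cons a t => obtain ⟨h1, -, -⟩ := h; simp at h1; exact ⟨t, by rw [h1]⟩

lemma path_append {j k i : Fin n} {p q : List (Fin n)} (hp : IsPathFrom E j k p)
    (hq : IsPathFrom E k i q) :
    IsPathFrom E j i (p ++ q.tail) ∧
      ∀ w : Fin n → Fin n → ℝ, pathWeight w (p ++ q.tail) = pathWeight w p + pathWeight w q := by
  induction p generalizing j with
  | nil => exact absurd rfl (path_ne_nil hp)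
  | cons a t ih =>
    obtain ⟨h1, h2, h3⟩ := hp
    simp only [List.head?_cons, Option.some_inj] at h1
    subst h1
    cases t with
    | nil =>
      simp only [List.getLast?_singleton, Option.some_inj] at h2; subst h2
      obtain ⟨s, rfl⟩ := path_head hq
      constructor
      · simpa using hq
      · intro w; simp [pathWeight_single]
    | cons b t' =>
      obtain ⟨hE, hp'⟩ := path_cons_split ⟨rfl, h2, h3⟩
      obtain ⟨hq1, hq2⟩ := ih hp'
      have hsh : (a :: b :: t') ++ q.tail = a :: (b :: (t' ++ q.tail)) := by simp
      refine ⟨⟨rfl, ?_, ?_⟩, ?_⟩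
      · rw [hsh, List.getLast?_cons_cons]
        exact hq1.2.1
      · rw [hsh]
        exact List.isChain_cons_cons.2 ⟨hE, hq1.2.2⟩
      · intro w
        rw [hsh, pathWeight_cons_cons, pathWeight_cons_cons]
        have h := hq2 w
        rw [List.cons_append] at h
        rw [h]; ring

lemma chain'_nodup (hdag : IsDAG E) : ∀ p : List (Fin n), p.Chain' E → p.Nodup := by
  intro p
  induction p with
  | nil => intro _; exact List.nodup_nil
  | cons a t ih =>
    intro hc
    refine List.nodup_cons.2 ⟨?_, ih hc.tail⟩
    intro hmem
    obtain ⟨s, s', rfl⟩ := List.append_of_mem hmem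
    have hpref : (a :: (s ++ [a])) ++ s' = a :: (s ++ a :: s') := by simp
    have hq : List.Chain' E (a :: (s ++ [a])) := hc.prefix ⟨s', hpref⟩
    have hpath : IsPathFrom E a a (a :: (s ++ [a])) := by
      refine ⟨rfl, ?_, hq⟩
      rw [show a :: (s ++ [a]) = (a :: s) ++ [a] by simp]
      exact List.getLast?_concat
    have := hdag a _ hpath
    simp at this

lemma path_nodup (hdag : IsDAG E) {j i : Fin n} {p : List (Fin n)}
    (h : IsPathFrom E j i p) : p.Nodup := chain'_nodup hdag p h.2.2

lemma edge_ne (hdag : IsDAG E) {a b : Fin n} (h : E a b) : a ≠ b := by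
  rintro rfl
  have := hdag a [a, a] (path_edge h)
  simp at this

lemma path_self_eq (hdag : IsDAG E) {j : Fin n} {p : List (Fin n)}
    (h : IsPathFrom E j j p) : p = [j] := by
  have hlen := hdag j p h
  obtain ⟨t, rfl⟩ := path_head h
  simp at hlen
  subst hlen
  rfl

/-- Telescoping: points of `Q(C)` are bounded by path weights. -/
lemma wdp_path_bound (hdag : IsDAG E) (hsupp : SupportedOn C E)
    {x : Fin n → ℝ} (hx : x ∈ wdp C) {j i : Fin n} {p : List (Fin n)}
    (hp : IsPathFrom E j i p) : x i - x j ≤ pathWeight (cw C) p := by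
  induction p generalizing j with
  | nil => exact absurd rfl (path_ne_nil hp)
  | cons a t ih =>
    obtain ⟨h1, h2, h3⟩ := hp
    simp only [List.head?_cons, Option.some_inj] at h1
    subst h1
    cases t with
    | nil =>
      simp only [List.getLast?_singleton, Option.some_inj] at h2; subst h2
      simp [pathWeight_single]
    | cons b t' =>
      obtain ⟨hE, hp'⟩ := path_cons_split ⟨rfl, h2, h3⟩
      have hab : a ≠ b := edge_ne hdag hE
      have hCne : C b a ≠ ⊤ := (hsupp.2 b a (Ne.symm hab)).2 hE
      have hcoe : ((cw C a b : ℝ) : Trop) = C b a := trop_coe_untop' hCne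
      have hxy : x b - x a ≤ cw C a b := by
        have := hx b a (Ne.symm hab)
        rw [← hcoe] at this
        exact_mod_cast this
      have := ih hp'
      rw [pathWeight_cons_cons]
      linarith

/-- All lists over `Fin n` of length ≤ `m`, as a finset. -/
def listsLE (n m : ℕ) : Finset (List (Fin n)) :=
  (Finset.range (m + 1)).biUnion fun k =>
    Finset.image (fun f : Fin k → Fin n => List.ofFn f) Finset.univ

lemma mem_listsLE {m : ℕ} {l : List (Fin n)} (h : l.length ≤ m) : l ∈ listsLE n m := by
  refine Finset.mem_biUnion.2 ⟨l.length, Finset.mem_range.2 (Nat.lt_succ_of_le h), ?_⟩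
  exact Finset.mem_image.2 ⟨l.get, Finset.mem_univ _, List.ofFn_get l⟩

/-- The (finite) set of paths from `j` to `i` in a DAG. -/
def pathsF (E : Fin n → Fin n → Prop) (j i : Fin n) : Finset (List (Fin n)) :=
  (listsLE n n).filter fun p => IsPathFrom E j i p

lemma mem_pathsF (hdag : IsDAG E) {j i : Fin n} {p : List (Fin n)}
    (h : IsPathFrom E j i p) : p ∈ pathsF E j i := by
  refine Finset.mem_filter.2 ⟨mem_listsLE ?_, h⟩
  have := (path_nodup hdag h).length_le_card
  simpa using this

/-- Tropical shortest-path distance from `j` to `i`. -/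
def tdist (E : Fin n → Fin n → Prop) (C : Matrix (Fin n) (Fin n) Trop) (j i : Fin n) : Trop :=
  (pathsF E j i).inf fun p => ((pathWeight (cw C) p : ℝ) : Trop)

lemma tdist_le (hdag : IsDAG E) {j i : Fin n} {p : List (Fin n)} (h : IsPathFrom E j i p) :
    tdist E C j i ≤ ((pathWeight (cw C) p : ℝ) : Trop) :=
  Finset.inf_le (mem_pathsF hdag h)

lemma tdist_attain {j i : Fin n} (h : tdist E C j i ≠ ⊤) :
    ∃ p, IsPathFrom E j i p ∧ tdist E C j i = ((pathWeight (cw C) p : ℝ) : Trop) := by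
  have hne : (pathsF E j i).Nonempty := by
    rw [Finset.nonempty_iff_ne_empty]
    intro he
    exact h (by simp [tdist, he])
  obtain ⟨p, hp, hinf⟩ := Finset.exists_mem_eq_inf (pathsF E j i) hne
    fun p => ((pathWeight (cw C) p : ℝ) : Trop)
  exact ⟨p, (Finset.mem_filter.1 hp).2, hinf⟩

lemma tdist_self (hdag : IsDAG E) (j : Fin n) : tdist E C j j = 0 := by
  apply le_antisymm
  · have := tdist_le (C := C) hdag (path_singleton j)
    simpa [pathWeight_single] using this
  · apply Finset.le_inf
    intro p hp
    have hp' := (Finset.mem_filter.1 hp).2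
    rw [path_self_eq hdag hp', pathWeight_single]
    simp

lemma tdist_le_edge (hdag : IsDAG E) {j i : Fin n} (h : E j i) :
    tdist E C j i ≤ ((cw C j i : ℝ) : Trop) := by
  have := tdist_le (C := C) hdag (path_edge h)
  rwa [pathWeight_cons_cons, pathWeight_single, add_zero] at this

lemma tdist_triangle (hdag : IsDAG E) (j k i : Fin n) :
    tdist E C j i ≤ tdist E C j k + tdist E C k i := by
  by_cases h1 : tdist E C j k = ⊤
  · simp [h1]
  by_cases h2 : tdist E C k i = ⊤
  · simp [h2]
  obtain ⟨p, hp, hpw⟩ := tdist_attain h1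
  obtain ⟨q, hq, hqw⟩ := tdist_attain h2
  obtain ⟨hr, hrw⟩ := path_append hp hq
  calc tdist E C j i ≤ ((pathWeight (cw C) (p ++ q.tail) : ℝ) : Trop) := tdist_le hdag hr
    _ = tdist E C j k + tdist E C k i := by
        rw [hrw (cw C), hpw, hqw]; exact_mod_cast rfl

/-- `inf_u tdist(u, v)`: a feasible base potential, in `Trop`. -/
def mT (E : Fin n → Fin n → Prop) (C : Matrix (Fin n) (Fin n) Trop) (v : Fin n) : Trop :=
  Finset.univ.inf fun u => tdist E C u v

lemma mT_ne_top (hdag : IsDAG E) (v : Fin n) : mT E C v ≠ ⊤ := by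
  have h : mT E C v ≤ tdist E C v v := Finset.inf_le (Finset.mem_univ v)
  rw [tdist_self hdag] at h
  exact fun ht => by simp [ht] at h

def basePot (E : Fin n → Fin n → Prop) (C : Matrix (Fin n) (Fin n) Trop) : Fin n → ℝ :=
  fun v => WithTop.untopD 0 (mT E C v)

lemma coe_basePot (hdag : IsDAG E) (v : Fin n) :
    ((basePot E C v : ℝ) : Trop) = mT E C v := trop_coe_untop' (mT_ne_top hdag v)

lemma basePot_edge (hdag : IsDAG E) {a b : Fin n} (h : E a b) :
    basePot E C b ≤ basePot E C a + cw C a b := by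
  have : Nonempty (Fin n) := ⟨a⟩
  have key : mT E C b ≤ mT E C a + ((cw C a b : ℝ) : Trop) := by
    obtain ⟨u, -, hu⟩ := Finset.exists_mem_eq_inf Finset.univ
      (Finset.univ_nonempty (α := Fin n)) (fun u => tdist E C u a)
    calc mT E C b ≤ tdist E C u b := Finset.inf_le (Finset.mem_univ u)
      _ ≤ tdist E C u a + tdist E C a b := tdist_triangle hdag u a b
      _ ≤ mT E C a + ((cw C a b : ℝ) : Trop) := by
          rw [← hu]
          exact add_le_add le_rfl (tdist_le_edge hdag h)
  rw [← coe_basePot hdag, ← coe_basePot hdag] at key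
  exact_mod_cast key

/-- The optimal potential in `Trop`. -/
def potT (E : Fin n → Fin n → Prop) (C : Matrix (Fin n) (Fin n) Trop) (j0 : Fin n) (K : ℝ) :
    Fin n → Trop :=
  fun v => tdist E C j0 v ⊓ ((basePot E C v + K : ℝ) : Trop)

lemma potT_ne_top (j0 : Fin n) (K : ℝ) (v : Fin n) : potT E C j0 K v ≠ ⊤ := by
  intro h
  have : potT E C j0 K v ≤ ((basePot E C v + K : ℝ) : Trop) := inf_le_right
  rw [h] at this
  simp [top_le_iff] at this

def pot (E : Fin n → Fin n → Prop) (C : Matrix (Fin n) (Fin n) Trop) (j0 : Fin n) (K : ℝ) :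
    Fin n → ℝ :=
  fun v => WithTop.untopD 0 (potT E C j0 K v)

lemma coe_pot (j0 : Fin n) (K : ℝ) (v : Fin n) :
    ((pot E C j0 K v : ℝ) : Trop) = potT E C j0 K v := trop_coe_untop' (potT_ne_top j0 K v)

lemma pot_mem (hdag : IsDAG E) (hsupp : SupportedOn C E) (j0 : Fin n) (K : ℝ) :
    pot E C j0 K ∈ wdp C := by
  intro i j hij
  by_cases hC : C i j = ⊤
  · rw [hC]; exact le_top
  have hE : E j i := (hsupp.2 i j hij).1 hC
  have hcoe : ((cw C j i : ℝ) : Trop) = C i j := trop_coe_untop' hC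
  set c := cw C j i with hc
  have key : potT E C j0 K i ≤ potT E C j0 K j + ((c : ℝ) : Trop) := by
    rcases le_total (tdist E C j0 j) (((basePot E C j + K : ℝ) : Trop)) with h | h
    · have hXj : potT E C j0 K j = tdist E C j0 j := inf_eq_left.2 h
      calc potT E C j0 K i ≤ tdist E C j0 i := inf_le_left
        _ ≤ tdist E C j0 j + tdist E C j i := tdist_triangle hdag j0 j i
        _ ≤ potT E C j0 K j + ((c : ℝ) : Trop) := by
            rw [hXj]; exact add_le_add le_rfl (tdist_le_edge hdag hE)
    · have hXj : potT E C j0 K j = ((basePot E C j + K : ℝ) : Trop) := inf_eq_right.2 h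
      have hb : basePot E C i ≤ basePot E C j + c := basePot_edge hdag hE
      calc potT E C j0 K i ≤ ((basePot E C i + K : ℝ) : Trop) := inf_le_right
        _ ≤ ((basePot E C j + K + c : ℝ) : Trop) := by exact_mod_cast by linarith
        _ = potT E C j0 K j + ((c : ℝ) : Trop) := by rw [hXj]; exact_mod_cast rfl
  rw [← coe_pot j0 K i, ← coe_pot j0 K j] at key
  have key2 : pot E C j0 K i ≤ pot E C j0 K j + c := by exact_mod_cast key
  rw [← hcoe]
  exact_mod_cast by linarith

/-- Key monotonicity: if `Q(C) ⊆ Q(C')` then shortest distances of `C` are under those of `C'`. -/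
lemma tdist_mono (hdag : IsDAG E) (hdag' : IsDAG E')
    (hsupp : SupportedOn C E) (hsupp' : SupportedOn C' E')
    (hsub : wdp C ⊆ wdp C') (j i : Fin n) : tdist E C j i ≤ tdist E' C' j i := by
  by_contra hlt
  replace hlt : tdist E' C' j i < tdist E C j i := not_le.1 hlt
  have hfin : tdist E' C' j i ≠ ⊤ := hlt.ne_top
  obtain ⟨p', hp', hd'⟩ := tdist_attain hfin
  set d' : ℝ := pathWeight (cw C') p' with hd'def
  set K : ℝ := max (-(basePot E C j)) (d' + 1 - basePot E C i) with hK
  set x := pot E C j K with hx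
  have hxQ : x ∈ wdp C := pot_mem hdag hsupp j K
  have hxQ' : x ∈ wdp C' := hsub hxQ
  have hxj : x j = 0 := by
    have h1 : potT E C j K j = 0 := by
      have h0 : tdist E C j j = 0 := tdist_self hdag j
      have h2 : (0 : Trop) ≤ ((basePot E C j + K : ℝ) : Trop) := by
        have : (0:ℝ) ≤ basePot E C j + K := by
          have := le_max_left (-(basePot E C j)) (d' + 1 - basePot E C i)
          rw [← hK] at this; linarith
        exact_mod_cast this
      rw [potT, h0]
      exact inf_eq_left.2 h2
    rw [hx, pot, h1]; rfl
  have hxi : d' < x i := by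
    have h1 : ((d' : ℝ) : Trop) < potT E C j K i := by
      simp only [potT]
      rw [lt_inf_iff]
      constructor
      · rw [← hd']; exact hlt
      · have : d' < basePot E C i + K := by
          have := le_max_right (-(basePot E C j)) (d' + 1 - basePot E C i)
          rw [← hK] at this; linarith
        exact_mod_cast this
    rw [← coe_pot j K i] at h1
    exact_mod_cast h1
  have hbound : x i - x j ≤ d' := wdp_path_bound hdag' hsupp' hxQ' hp'
  rw [hxj] at hbound
  linarith

lemma exists_mid (hdag : IsDAG E) {j i : Fin n} {p : List (Fin n)}
    (hp : IsPathFrom E j i p) (hne : p ≠ [j, i]) (hji : j ≠ i) :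
    ∃ k, k ≠ j ∧ k ≠ i ∧
      tdist E C j k + tdist E C k i ≤ ((pathWeight (cw C) p : ℝ) : Trop) := by
  obtain ⟨t, rfl⟩ := path_head hp
  cases t with
  | nil =>
    obtain ⟨-, h2, -⟩ := hp
    simp only [List.getLast?_singleton, Option.some_inj] at h2
    exact absurd h2 hji
  | cons b t' =>
    obtain ⟨hE, hp2⟩ := path_cons_split hp
    cases t' with
    | nil =>
      obtain ⟨-, h2, -⟩ := hp2
      simp only [List.getLast?_singleton, Option.some_inj] at h2
      subst h2
      exact absurd rfl hne
    | cons c t'' =>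
      have hnod := path_nodup hdag hp
      have hbj : b ≠ j := by
        have := (List.nodup_cons.1 hnod).1
        intro hbj; exact this (by rw [← hbj]; exact List.mem_cons_self)
      have hbnotin : b ∉ c :: t'' := (List.nodup_cons.1 (List.nodup_cons.1 hnod).2).1
      have hlast : (c :: t'').getLast? = some i := by
        have := hp2.2.1
        rwa [List.getLast?_cons_cons] at this
      have hiin : i ∈ c :: t'' :=
        List.mem_of_mem_getLast? (show i ∈ (c :: t'').getLast? by rw [hlast]; rfl)
      have hbi : b ≠ i := fun hbi => hbnotin (hbi ▸ hiin)
      refine ⟨b, hbj, hbi, ?_⟩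
      have h1 : tdist E C j b ≤ ((cw C j b : ℝ) : Trop) := tdist_le_edge hdag hE
      have h2 : tdist E C b i ≤ ((pathWeight (cw C) (b :: c :: t'') : ℝ) : Trop) :=
        tdist_le hdag hp2
      calc tdist E C j b + tdist E C b i
          ≤ ((cw C j b : ℝ) : Trop) + ((pathWeight (cw C) (b :: c :: t'') : ℝ) : Trop) :=
            add_le_add h1 h2
        _ = ((pathWeight (cw C) (j :: b :: c :: t'') : ℝ) : Trop) := by
            rw [pathWeight_cons_cons]; exact_mod_cast rfl

lemma wtr_tdist (hdag : IsDAG E) {j i : Fin n} (h : InWTR E (cw C) j i) :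
    tdist E C j i = ((cw C j i : ℝ) : Trop) := by
  apply le_antisymm (tdist_le_edge hdag h.1)
  apply Finset.le_inf
  intro p hp
  have hp' := (Finset.mem_filter.1 hp).2
  by_cases hpe : p = [j, i]
  · subst hpe
    rw [pathWeight_cons_cons, pathWeight_single, add_zero]
  · have := (h.2 p hp' hpe).le
    exact_mod_cast this

lemma wtr_iff (hdag : IsDAG E) (j i : Fin n) :
    InWTR E (cw C) j i ↔ j ≠ i ∧ tdist E C j i ≠ ⊤ ∧
      ∀ k, k ≠ j → k ≠ i → tdist E C j i < tdist E C j k + tdist E C k i := by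
  constructor
  · intro h
    have hne : j ≠ i := edge_ne hdag h.1
    have hdist := wtr_tdist hdag h
    refine ⟨hne, by rw [hdist]; exact WithTop.coe_ne_top, ?_⟩
    intro k hkj hki
    by_cases h1 : tdist E C j k = ⊤
    · rw [hdist, h1, top_add]; exact WithTop.coe_lt_top _
    by_cases h2 : tdist E C k i = ⊤
    · rw [hdist, h2, add_top]; exact WithTop.coe_lt_top _
    obtain ⟨p, hpp, hpw⟩ := tdist_attain h1
    obtain ⟨q, hqp, hqw⟩ := tdist_attain h2
    obtain ⟨hr, hrw⟩ := path_append hpp hqp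
    have hkr : k ∈ p ++ q.tail := by
      refine List.mem_append_left _ ?_
      exact List.mem_of_mem_getLast? (show k ∈ p.getLast? by rw [hpp.2.1]; rfl)
    have hrne : p ++ q.tail ≠ [j, i] := by
      intro he
      rw [he] at hkr
      simp at hkr
      rcases hkr with h | h
      exacts [hkj h, hki h]
    have hstrict := h.2 _ hr hrne
    rw [hdist, hpw, hqw, hrw (cw C)] at *
    calc ((cw C j i : ℝ) : Trop) < ((pathWeight (cw C) p + pathWeight (cw C) q : ℝ) : Trop) := by
          exact_mod_cast hstrict
      _ = _ := by exact_mod_cast rfl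
  · rintro ⟨hne, hfin, hstrict⟩
    obtain ⟨p0, hp0, hw0⟩ := tdist_attain hfin
    have hp0e : p0 = [j, i] := by
      by_contra hp0ne
      obtain ⟨k, hkj, hki, hk⟩ := exists_mid hdag hp0 hp0ne hne
      rw [← hw0] at hk
      exact absurd (lt_of_lt_of_le (hstrict k hkj hki) hk) (lt_irrefl _)
    subst hp0e
    have hE : E j i := (List.isChain_cons_cons.1 hp0.2.2).1
    have hw1 : tdist E C j i = ((cw C j i : ℝ) : Trop) := by
      rw [hw0, pathWeight_cons_cons, pathWeight_single, add_zero]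
    refine ⟨hE, ?_⟩
    intro p hp hpne
    obtain ⟨k, hkj, hki, hk⟩ := exists_mid hdag hp hpne hne
    have := lt_of_lt_of_le (hstrict k hkj hki) hk
    rw [hw1] at this
    exact_mod_cast this

end AuxDev

/-- If `C`, `C'` are supported on DAGs `G`, `G'` on the same node set
and `Q(C) = Q(C')`, then the weighted transitive reductions coincide:
`G^♭_w = (G')^♭_{w'}` with equal weights, i.e. `C^♭ = (C')^♭`. -/
theorem stmt10 {n : ℕ} (E E' : Fin n → Fin n → Prop)
    (C C' : Matrix (Fin n) (Fin n) Trop)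
    (hdag : IsDAG E) (hdag' : IsDAG E')
    (hsupp : SupportedOn C E) (hsupp' : SupportedOn C' E')
    (hQ : wdp C = wdp C') :
    (∀ j i, InWTR E (cw C) j i ↔ InWTR E' (cw C') j i) ∧
    CflatM E C = CflatM E' C' := by
  have hdist : ∀ a b, tdist E C a b = tdist E' C' a b := fun a b =>
    le_antisymm (tdist_mono hdag hdag' hsupp hsupp' hQ.subset a b)
      (tdist_mono hdag' hdag hsupp' hsupp hQ.symm.subset a b)
  have hiff : ∀ j i, InWTR E (cw C) j i ↔ InWTR E' (cw C') j i := by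
    intro j i
    rw [wtr_iff hdag, wtr_iff hdag']
    simp only [hdist]
  refine ⟨hiff, ?_⟩
  funext a b
  simp only [CflatM]
  by_cases hab : a = b
  · simp [hab]
  rw [if_neg hab, if_neg hab]
  by_cases hw : InWTR E (cw C) b a
  · have hw' : InWTR E' (cw C') b a := (hiff b a).1 hw
    rw [if_pos hw, if_pos hw']
    have hCab : C a b ≠ ⊤ := (hsupp.2 a b hab).2 hw.1
    have hCab' : C' a b ≠ ⊤ := (hsupp'.2 a b hab).2 hw'.1
    have e1 : C a b = tdist E C b a := by
      rw [wtr_tdist hdag hw]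
      exact (trop_coe_untop' hCab).symm
    have e2 : C' a b = tdist E' C' b a := by
      rw [wtr_tdist hdag' hw']
      exact (trop_coe_untop' hCab').symm
    rw [e1, e2, hdist]
  · have hw' : ¬ InWTR E' (cw C') b a := fun h => hw ((hiff b a).2 h)
    rw [if_neg hw, if_neg hw']
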